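/- For every PEG G, parsing expression p, subject xy, and result X (either fail or a pair (y, x')): if G[p] xy ⇝ X in the original PEG semantics, then G[p] xy ∅ ⇝ X in the left-recursive extended semantics with the empty memoization table ∅. -/

import Mathlib

/-- Parsing expressions over non-terminals `N` and terminals `T`. -/
inductive PExp (N T : Type) : Type where
  | empty : PExp N T
  | term : T → PExp N T
  | var : N → PExp N T
  | seq : PExp N T → PExp N T → PExp N T
  | choice : PExp N T → PExp N T → PExp N T
  | star : PExp N T → PExp N T
  | nott : PExp N T → PExp N T

/-- A PEG: a rule for every non-terminal and a starting expression.
(A PEG whose `prod` is a total function is a closed PEG.) -/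
structure PEG (N T : Type) where
  prod : N → PExp N T
  start : PExp N T

/-- Symbols of parse strings: terminals and tagged brackets `A[...]`. -/
inductive PSym (N T : Type) : Type where
  | t : T → PSym N T
  | node : N → List (PSym N T) → PSym N T

/-- Parse strings. -/
abbrev PStr (N T : Type) := List (PSym N T)

/-- Result of a match: `fail`, or a pair (remaining suffix, parse string). -/
inductive Res (N T : Type) : Type where
  | fail : Res N T
  | ok : List T → PStr N T → Res N T
/-- The original PEG semantics `G[p] s ⇝ r`. -/
inductive Match {N T : Type} (G : PEG N T) : PExp N T → List T → Res N T → Prop where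
  | empty1 : Match G .empty s (.ok s [])
  | char1 : Match G (.term a) (a :: s) (.ok s [.t a])
  | char2 : b ≠ a → Match G (.term b) (a :: s) .fail
  | char3 : Match G (.term a) [] .fail
  | var1 : Match G (G.prod A) s (.ok s1 t) → Match G (.var A) s (.ok s1 [.node A t])
  | var2 : Match G (G.prod A) s .fail → Match G (.var A) s .fail
  | con1 : Match G p1 s (.ok s1 t1) → Match G p2 s1 (.ok s2 t2) →
      Match G (.seq p1 p2) s (.ok s2 (t1 ++ t2))
  | con2 : Match G p1 s (.ok s1 t1) → Match G p2 s1 .fail → Match G (.seq p1 p2) s .fail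
  | con3 : Match G p1 s .fail → Match G (.seq p1 p2) s .fail
  | ord1 : Match G p1 s (.ok s1 t1) → Match G (.choice p1 p2) s (.ok s1 t1)
  | ord2 : Match G p1 s .fail → Match G p2 s .fail → Match G (.choice p1 p2) s .fail
  | ord3 : Match G p1 s .fail → Match G p2 s (.ok s1 t1) → Match G (.choice p1 p2) s (.ok s1 t1)
  | not1 : Match G p s .fail → Match G (.nott p) s (.ok s [])
  | not2 : Match G p s (.ok s1 t1) → Match G (.nott p) s .fail
  | rep1 : Match G p s .fail → Match G (.star p) s (.ok s [])
  | rep2 : Match G p s (.ok s1 t1) → Match G (.star p) s1 (.ok s2 t2) →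
      Match G (.star p) s (.ok s2 (t1 ++ t2))
/-- Memoization tables: partial functions from (non-terminal, subject) to results. -/
abbrev Memo (N T : Type) := N → List T → Option (Res N T)

/-- `L[(A,s) ↦ r]`. -/
def Memo.update {N T : Type} [DecidableEq N] [DecidableEq T]
    (L : Memo N T) (A : N) (s : List T) (r : Res N T) : Memo N T :=
  fun B u => if B = A ∧ u = s then some r else L B u

/-- The empty memoization table. -/
def Memo.empty {N T : Type} : Memo N T := fun _ _ => none
mutual
/-- The left-recursive extended semantics `G[p] s L ⇝ r`. -/
inductive LMatch {N T : Type} [DecidableEq N] [DecidableEq T] (G : PEG N T) :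
    PExp N T → List T → Memo N T → Res N T → Prop where
  | empty1 : LMatch G .empty s L (.ok s [])
  | char1 : LMatch G (.term a) (a :: s) L (.ok s [.t a])
  | char2 : b ≠ a → LMatch G (.term b) (a :: s) L .fail
  | char3 : LMatch G (.term a) [] L .fail
  | lvar1 : L A s = none →
      LMatch G (G.prod A) s (Memo.update L A s .fail) (.ok s1 t1) →
      Inc G A s (Memo.update L A s (.ok s1 t1)) (.ok s2 t2) →
      LMatch G (.var A) s L (.ok s2 [.node A t2])
  | lvar2 : L A s = none →
      LMatch G (G.prod A) s (Memo.update L A s .fail) .fail →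
      LMatch G (.var A) s L .fail
  | lvar3 : L A s = some .fail → LMatch G (.var A) s L .fail
  | lvar4 : L A s = some (.ok y t) → LMatch G (.var A) s L (.ok y [.node A t])
  | con1 : LMatch G p1 s L (.ok s1 t1) → LMatch G p2 s1 L (.ok s2 t2) →
      LMatch G (.seq p1 p2) s L (.ok s2 (t1 ++ t2))
  | con2 : LMatch G p1 s L (.ok s1 t1) → LMatch G p2 s1 L .fail →
      LMatch G (.seq p1 p2) s L .fail
  | con3 : LMatch G p1 s L .fail → LMatch G (.seq p1 p2) s L .fail
  | ord1 : LMatch G p1 s L (.ok s1 t1) → LMatch G (.choice p1 p2) s L (.ok s1 t1)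
  | ord2 : LMatch G p1 s L .fail → LMatch G p2 s L .fail →
      LMatch G (.choice p1 p2) s L .fail
  | ord3 : LMatch G p1 s L .fail → LMatch G p2 s L (.ok s1 t1) →
      LMatch G (.choice p1 p2) s L (.ok s1 t1)
  | not1 : LMatch G p s L .fail → LMatch G (.nott p) s L (.ok s [])
  | not2 : LMatch G p s L (.ok s1 t1) → LMatch G (.nott p) s L .fail
  | rep1 : LMatch G p s L .fail → LMatch G (.star p) s L (.ok s [])
  | rep2 : LMatch G p s L (.ok s1 t1) → LMatch G (.star p) s1 L (.ok s2 t2) →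
      LMatch G (.star p) s L (.ok s2 (t1 ++ t2))

/-- The auxiliary bound-increasing relation `G[P(A)] s L ⇝INC r`. -/
inductive Inc {N T : Type} [DecidableEq N] [DecidableEq T] (G : PEG N T) :
    N → List T → Memo N T → Res N T → Prop where
  | inc1 : y ≠ [] →
      LMatch G (G.prod A) (x ++ y ++ z ++ w)
        (Memo.update L A (x ++ y ++ z ++ w) (.ok (y ++ z ++ w) t1)) (.ok (z ++ w) t2) →
      Inc G A (x ++ y ++ z ++ w)
        (Memo.update L A (x ++ y ++ z ++ w) (.ok (z ++ w) t2)) (.ok w t3) →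
      Inc G A (x ++ y ++ z ++ w)
        (Memo.update L A (x ++ y ++ z ++ w) (.ok (y ++ z ++ w) t1)) (.ok w t3)
  | inc2 : L A s = some r → LMatch G (G.prod A) s L .fail → Inc G A s L r
  | inc3 :
      LMatch G (G.prod A) (x ++ y ++ z)
        (Memo.update L A (x ++ y ++ z) (.ok z t1)) (.ok (y ++ z) t2) →
      Inc G A (x ++ y ++ z)
        (Memo.update L A (x ++ y ++ z) (.ok z t1)) (.ok z t1)
end
section Aux
variable {N T : Type}

/-- Height-indexed version of `Match`. -/
inductive MatchN (G : PEG N T) : ℕ → PExp N T → List T → Res N T → Prop where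
  | empty1 : MatchN G (n+1) .empty s (.ok s [])
  | char1 : MatchN G (n+1) (.term a) (a :: s) (.ok s [.t a])
  | char2 : b ≠ a → MatchN G (n+1) (.term b) (a :: s) .fail
  | char3 : MatchN G (n+1) (.term a) [] .fail
  | var1 : MatchN G n (G.prod A) s (.ok s1 t) → MatchN G (n+1) (.var A) s (.ok s1 [.node A t])
  | var2 : MatchN G n (G.prod A) s .fail → MatchN G (n+1) (.var A) s .fail
  | con1 : MatchN G n1 p1 s (.ok s1 t1) → MatchN G n2 p2 s1 (.ok s2 t2) →
      MatchN G (n1+n2+1) (.seq p1 p2) s (.ok s2 (t1 ++ t2))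
  | con2 : MatchN G n1 p1 s (.ok s1 t1) → MatchN G n2 p2 s1 .fail →
      MatchN G (n1+n2+1) (.seq p1 p2) s .fail
  | con3 : MatchN G n p1 s .fail → MatchN G (n+1) (.seq p1 p2) s .fail
  | ord1 : MatchN G n p1 s (.ok s1 t1) → MatchN G (n+1) (.choice p1 p2) s (.ok s1 t1)
  | ord2 : MatchN G n1 p1 s .fail → MatchN G n2 p2 s .fail →
      MatchN G (n1+n2+1) (.choice p1 p2) s .fail
  | ord3 : MatchN G n1 p1 s .fail → MatchN G n2 p2 s (.ok s1 t1) →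
      MatchN G (n1+n2+1) (.choice p1 p2) s (.ok s1 t1)
  | not1 : MatchN G n p s .fail → MatchN G (n+1) (.nott p) s (.ok s [])
  | not2 : MatchN G n p s (.ok s1 t1) → MatchN G (n+1) (.nott p) s .fail
  | rep1 : MatchN G n p s .fail → MatchN G (n+1) (.star p) s (.ok s [])
  | rep2 : MatchN G n1 p s (.ok s1 t1) → MatchN G n2 (.star p) s1 (.ok s2 t2) →
      MatchN G (n1+n2+1) (.star p) s (.ok s2 (t1 ++ t2))

theorem MatchN.toMatch {G : PEG N T} {n p s X} (h : MatchN G n p s X) : Match G p s X := by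
  induction h with
  | empty1 => exact .empty1
  | char1 => exact .char1
  | char2 h => exact .char2 h
  | char3 => exact .char3
  | var1 _ ih => exact .var1 ih
  | var2 _ ih => exact .var2 ih
  | con1 _ _ ih1 ih2 => exact .con1 ih1 ih2
  | con2 _ _ ih1 ih2 => exact .con2 ih1 ih2
  | con3 _ ih => exact .con3 ih
  | ord1 _ ih => exact .ord1 ih
  | ord2 _ _ ih1 ih2 => exact .ord2 ih1 ih2
  | ord3 _ _ ih1 ih2 => exact .ord3 ih1 ih2
  | not1 _ ih => exact .not1 ih
  | not2 _ ih => exact .not2 ih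
  | rep1 _ ih => exact .rep1 ih
  | rep2 _ _ ih1 ih2 => exact .rep2 ih1 ih2

theorem Match.toMatchN {G : PEG N T} {p s X} (h : Match G p s X) : ∃ n, MatchN G n p s X := by
  induction h with
  | empty1 => exact ⟨1, .empty1⟩
  | char1 => exact ⟨1, .char1⟩
  | char2 h => exact ⟨1, .char2 h⟩
  | char3 => exact ⟨1, .char3⟩
  | var1 _ ih => obtain ⟨n, hn⟩ := ih; exact ⟨n+1, .var1 hn⟩
  | var2 _ ih => obtain ⟨n, hn⟩ := ih; exact ⟨n+1, .var2 hn⟩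
  | con1 _ _ ih1 ih2 =>
      obtain ⟨n1, h1⟩ := ih1; obtain ⟨n2, h2⟩ := ih2; exact ⟨n1+n2+1, .con1 h1 h2⟩
  | con2 _ _ ih1 ih2 =>
      obtain ⟨n1, h1⟩ := ih1; obtain ⟨n2, h2⟩ := ih2; exact ⟨n1+n2+1, .con2 h1 h2⟩
  | con3 _ ih => obtain ⟨n, hn⟩ := ih; exact ⟨n+1, .con3 hn⟩
  | ord1 _ ih => obtain ⟨n, hn⟩ := ih; exact ⟨n+1, .ord1 hn⟩
  | ord2 _ _ ih1 ih2 =>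
      obtain ⟨n1, h1⟩ := ih1; obtain ⟨n2, h2⟩ := ih2; exact ⟨n1+n2+1, .ord2 h1 h2⟩
  | ord3 _ _ ih1 ih2 =>
      obtain ⟨n1, h1⟩ := ih1; obtain ⟨n2, h2⟩ := ih2; exact ⟨n1+n2+1, .ord3 h1 h2⟩
  | not1 _ ih => obtain ⟨n, hn⟩ := ih; exact ⟨n+1, .not1 hn⟩
  | not2 _ ih => obtain ⟨n, hn⟩ := ih; exact ⟨n+1, .not2 hn⟩
  | rep1 _ ih => obtain ⟨n, hn⟩ := ih; exact ⟨n+1, .rep1 hn⟩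
  | rep2 _ _ ih1 ih2 =>
      obtain ⟨n1, h1⟩ := ih1; obtain ⟨n2, h2⟩ := ih2; exact ⟨n1+n2+1, .rep2 h1 h2⟩

/-- The original semantics is deterministic. -/
theorem match_det {G : PEG N T} {p s X} (h1 : Match G p s X) :
    ∀ {Y}, Match G p s Y → X = Y := by
  induction h1 with
  | empty1 => intro Y hY; cases hY; rfl
  | char1 =>
      intro Y hY
      cases hY with
      | char1 => rfl
      | char2 h => exact absurd rfl h
  | char2 h =>
      intro Y hY
      cases hY with
      | char1 => exact absurd rfl h
      | char2 _ => rfl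
  | char3 => intro Y hY; cases hY; rfl
  | var1 _ ih =>
      intro Y hY
      cases hY with
      | var1 h' => obtain ⟨rfl, rfl⟩ := Res.ok.inj (ih h'); rfl
      | var2 h' => exact absurd (ih h') (by simp)
  | var2 _ ih =>
      intro Y hY
      cases hY with
      | var1 h' => exact absurd (ih h') (by simp)
      | var2 _ => rfl
  | con1 _ _ ih1 ih2 =>
      intro Y hY
      cases hY with
      | con1 h1' h2' =>
          obtain ⟨rfl, rfl⟩ := Res.ok.inj (ih1 h1')
          obtain ⟨rfl, rfl⟩ := Res.ok.inj (ih2 h2')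
          rfl
      | con2 h1' h2' =>
          obtain ⟨rfl, rfl⟩ := Res.ok.inj (ih1 h1')
          exact absurd (ih2 h2') (by simp)
      | con3 h1' => exact absurd (ih1 h1') (by simp)
  | con2 _ _ ih1 ih2 =>
      intro Y hY
      cases hY with
      | con1 h1' h2' =>
          obtain ⟨rfl, rfl⟩ := Res.ok.inj (ih1 h1')
          exact absurd (ih2 h2') (by simp)
      | con2 h1' h2' => rfl
      | con3 h1' => exact absurd (ih1 h1') (by simp)
  | con3 _ ih =>
      intro Y hY
      cases hY with
      | con1 h1' _ => exact absurd (ih h1') (by simp)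
      | con2 h1' _ => exact absurd (ih h1') (by simp)
      | con3 _ => rfl
  | ord1 _ ih =>
      intro Y hY
      cases hY with
      | ord1 h' => exact ih h'
      | ord2 h' _ => exact absurd (ih h') (by simp)
      | ord3 h' _ => exact absurd (ih h') (by simp)
  | ord2 _ _ ih1 ih2 =>
      intro Y hY
      cases hY with
      | ord1 h' => exact absurd (ih1 h') (by simp)
      | ord2 _ _ => rfl
      | ord3 _ h' => exact absurd (ih2 h') (by simp)
  | ord3 _ _ ih1 ih2 =>
      intro Y hY
      cases hY with
      | ord1 h' => exact absurd (ih1 h') (by simp)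
      | ord2 _ h' => exact absurd (ih2 h') (by simp)
      | ord3 _ h' => exact ih2 h'
  | not1 _ ih =>
      intro Y hY
      cases hY with
      | not1 _ => rfl
      | not2 h' => exact absurd (ih h') (by simp)
  | not2 _ ih =>
      intro Y hY
      cases hY with
      | not1 h' => exact absurd (ih h') (by simp)
      | not2 _ => rfl
  | rep1 _ ih =>
      intro Y hY
      cases hY with
      | rep1 _ => rfl
      | rep2 h' _ => exact absurd (ih h') (by simp)
  | rep2 _ _ ih1 ih2 =>
      intro Y hY
      cases hY with
      | rep1 h' => exact absurd (ih1 h') (by simp)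
      | rep2 h1' h2' =>
          obtain ⟨rfl, rfl⟩ := Res.ok.inj (ih1 h1')
          obtain ⟨rfl, rfl⟩ := Res.ok.inj (ih2 h2')
          rfl

/-- A successful match leaves a suffix of the subject. -/
theorem match_suffix {G : PEG N T} {p s X} (h : Match G p s X) :
    ∀ {s1 t}, X = .ok s1 t → s1 <:+ s := by
  induction h with
  | empty1 => intro s1 t h; obtain ⟨rfl, rfl⟩ := Res.ok.inj h; exact List.suffix_rfl
  | char1 => intro s1 t h; obtain ⟨rfl, rfl⟩ := Res.ok.inj h; exact ⟨[_], rfl⟩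
  | char2 _ => intro _ _ h; simp at h
  | char3 => intro _ _ h; simp at h
  | var1 _ ih => intro s1 t h; obtain ⟨rfl, rfl⟩ := Res.ok.inj h; exact ih rfl
  | var2 _ => intro _ _ h; simp at h
  | con1 _ _ ih1 ih2 =>
      intro s1 t h; obtain ⟨rfl, rfl⟩ := Res.ok.inj h
      exact (ih2 rfl).trans (ih1 rfl)
  | con2 _ _ _ _ => intro _ _ h; simp at h
  | con3 _ _ => intro _ _ h; simp at h
  | ord1 _ ih => intro s1 t h; obtain ⟨rfl, rfl⟩ := Res.ok.inj h; exact ih rfl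
  | ord2 _ _ _ _ => intro _ _ h; simp at h
  | ord3 _ _ _ ih2 => intro s1 t h; obtain ⟨rfl, rfl⟩ := Res.ok.inj h; exact ih2 rfl
  | not1 _ _ => intro s1 t h; obtain ⟨rfl, rfl⟩ := Res.ok.inj h; exact List.suffix_rfl
  | not2 _ _ => intro _ _ h; simp at h
  | rep1 _ _ => intro s1 t h; obtain ⟨rfl, rfl⟩ := Res.ok.inj h; exact List.suffix_rfl
  | rep2 _ _ ih1 ih2 =>
      intro s1 t h; obtain ⟨rfl, rfl⟩ := Res.ok.inj h
      exact (ih2 rfl).trans (ih1 rfl)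

theorem nat_min {P : ℕ → Prop} (h : ∃ n, P n) : ∃ n, P n ∧ ∀ k, P k → n ≤ k := by
  classical
  exact ⟨Nat.find h, Nat.find_spec h, fun k hk => Nat.find_min' h hk⟩

end Aux
theorem lmatch_main {N T : Type} [DecidableEq N] [DecidableEq T] (G : PEG N T) :
    ∀ (n : ℕ) (p : PExp N T) (s : List T) (X : Res N T) (L : Memo N T),
      MatchN G n p s X →
      (∀ k, MatchN G k p s X → n ≤ k) →
      (∀ B u y t, L B u = some (.ok y t) → Match G (G.prod B) u (.ok y t)) →
      (∀ B u, L B u = some .fail → ∀ j y t, j ≤ n → ¬ MatchN G j (.var B) u (.ok y t)) →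
      LMatch G p s L X := by
  intro n
  induction n using Nat.strong_induction_on with
  | _ n IH =>
  intro p s X L hM hmin hok hfail
  have hrec : ∀ {m : ℕ} {p' : PExp N T} {s' : List T} {X' : Res N T} (L' : Memo N T),
      m < n → MatchN G m p' s' X' →
      (∀ B u y t, L' B u = some (.ok y t) → Match G (G.prod B) u (.ok y t)) →
      (∀ B u, L' B u = some .fail → ∀ j y t, j ≤ m → ¬ MatchN G j (.var B) u (.ok y t)) →
      LMatch G p' s' L' X' := by
    intro m p' s' X' L' hmn hM' hok' hfail'
    obtain ⟨m₀, hm₀, hmin₀⟩ := nat_min (P := fun j => MatchN G j p' s' X') ⟨m, hM'⟩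
    exact IH m₀ (lt_of_le_of_lt (hmin₀ m hM') hmn) p' s' X' L' hm₀ hmin₀ hok'
      (fun B u hBu j y t hj => hfail' B u hBu j y t (hj.trans (hmin₀ m hM')))
  have recL : ∀ {m : ℕ} {p' : PExp N T} {s' : List T} {X' : Res N T},
      m < n → MatchN G m p' s' X' → LMatch G p' s' L X' :=
    fun hmn hM' => hrec L hmn hM' hok
      (fun B u hBu j y t hj => hfail B u hBu j y t (by omega))
  cases hM with
  | empty1 => exact .empty1
  | char1 => exact .char1
  | char2 h => exact .char2 h
  | char3 => exact .char3
  | var1 hp =>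
      rename_i k A s1 t
      have hMatchP : Match G (G.prod A) s (.ok s1 t) := hp.toMatch
      cases hLA : L A s with
      | none =>
          obtain ⟨m, hm, hminm⟩ :=
            nat_min (⟨k, hp⟩ : ∃ j, MatchN G j (G.prod A) s (.ok s1 t))
          have hmk : m ≤ k := hminm k hp
          have hseedok : ∀ B u y t', Memo.update L A s .fail B u = some (.ok y t') →
              Match G (G.prod B) u (.ok y t') := by
            intro B u y t' hBu
            simp only [Memo.update] at hBu
            by_cases hcase : B = A ∧ u = s
            · rw [if_pos hcase] at hBu; simp at hBu
            · rw [if_neg hcase] at hBu; exact hok B u y t' hBu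
          have hseedfail : ∀ B u, Memo.update L A s .fail B u = some .fail →
              ∀ j y t', j ≤ m → ¬ MatchN G j (.var B) u (.ok y t') := by
            intro B u hBu j y t' hj hbad
            simp only [Memo.update] at hBu
            by_cases hcase : B = A ∧ u = s
            · obtain ⟨rfl, rfl⟩ := hcase
              have heq : (Res.ok y t' : Res N T) = .ok s1 [.node B t] :=
                match_det hbad.toMatch (.var1 hMatchP)
              obtain ⟨rfl, rfl⟩ := Res.ok.inj heq
              have := hmin j hbad
              omega
            · rw [if_neg hcase] at hBu
              exact hfail B u hBu j y t' (by omega) hbad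
          have h1 : LMatch G (G.prod A) s (Memo.update L A s .fail) (.ok s1 t) :=
            hrec _ (by omega) hm hseedok hseedfail
          have hok2 : ∀ B u y t', Memo.update L A s (.ok s1 t) B u = some (.ok y t') →
              Match G (G.prod B) u (.ok y t') := by
            intro B u y t' hBu
            simp only [Memo.update] at hBu
            by_cases hcase : B = A ∧ u = s
            · obtain ⟨rfl, rfl⟩ := hcase
              rw [if_pos ⟨rfl, rfl⟩] at hBu
              obtain ⟨rfl, rfl⟩ := Res.ok.inj (Option.some.inj hBu)
              exact hMatchP
            · rw [if_neg hcase] at hBu; exact hok B u y t' hBu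
          have hfail2 : ∀ B u, Memo.update L A s (.ok s1 t) B u = some .fail →
              ∀ j y t', j ≤ m → ¬ MatchN G j (.var B) u (.ok y t') := by
            intro B u hBu
            simp only [Memo.update] at hBu
            by_cases hcase : B = A ∧ u = s
            · rw [if_pos hcase] at hBu; simp at hBu
            · rw [if_neg hcase] at hBu
              exact fun j y t' hj => hfail B u hBu j y t' (by omega)
          have h2 : LMatch G (G.prod A) s (Memo.update L A s (.ok s1 t)) (.ok s1 t) :=
            hrec _ (by omega) hm hok2 hfail2
          obtain ⟨x, hx⟩ := match_suffix hMatchP rfl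
          have hinc : Inc G A s (Memo.update L A s (.ok s1 t)) (.ok s1 t) := by
            subst hx
            have h2' : LMatch G (G.prod A) (x ++ [] ++ s1)
                (Memo.update L A (x ++ [] ++ s1) (.ok s1 t)) (.ok ([] ++ s1) t) := by
              simpa using h2
            have hinc0 := Inc.inc3 (G := G) (A := A) (x := x) (y := ([] : List T))
              (z := s1) (t1 := t) (t2 := t) (L := L) h2'
            simpa using hinc0
          exact .lvar1 hLA h1 hinc
      | some r =>
          cases r with
          | fail =>
              exact absurd (MatchN.var1 hp)
                (hfail A s hLA (k+1) s1 [.node A t] le_rfl)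
          | ok y t' =>
              have hMy : Match G (G.prod A) s (.ok y t') := hok A s y t' hLA
              obtain ⟨rfl, rfl⟩ := Res.ok.inj (match_det hMy hMatchP)
              exact .lvar4 hLA
  | var2 hp =>
      rename_i k A
      have hMatchP : Match G (G.prod A) s .fail := hp.toMatch
      cases hLA : L A s with
      | none =>
          obtain ⟨m, hm, hminm⟩ :=
            nat_min (⟨k, hp⟩ : ∃ j, MatchN G j (G.prod A) s (.fail : Res N T))
          have hmk : m ≤ k := hminm k hp
          have hseedok : ∀ B u y t', Memo.update L A s .fail B u = some (.ok y t') →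
              Match G (G.prod B) u (.ok y t') := by
            intro B u y t' hBu
            simp only [Memo.update] at hBu
            by_cases hcase : B = A ∧ u = s
            · rw [if_pos hcase] at hBu; simp at hBu
            · rw [if_neg hcase] at hBu; exact hok B u y t' hBu
          have hseedfail : ∀ B u, Memo.update L A s .fail B u = some .fail →
              ∀ j y t', j ≤ m → ¬ MatchN G j (.var B) u (.ok y t') := by
            intro B u hBu j y t' hj hbad
            simp only [Memo.update] at hBu
            by_cases hcase : B = A ∧ u = s
            · obtain ⟨rfl, rfl⟩ := hcase
              have heq : (Res.ok y t' : Res N T) = .fail :=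
                match_det hbad.toMatch (.var2 hMatchP)
              simp at heq
            · rw [if_neg hcase] at hBu
              exact hfail B u hBu j y t' (by omega) hbad
          have h1 : LMatch G (G.prod A) s (Memo.update L A s .fail) .fail :=
            hrec _ (by omega) hm hseedok hseedfail
          exact .lvar2 hLA h1
      | some r =>
          cases r with
          | fail => exact .lvar3 hLA
          | ok y t' =>
              exact absurd (match_det (hok A s y t' hLA) hMatchP) (by simp)
  | con1 hp1 hp2 => exact .con1 (recL (by omega) hp1) (recL (by omega) hp2)
  | con2 hp1 hp2 => exact .con2 (recL (by omega) hp1) (recL (by omega) hp2)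
  | con3 hp => exact .con3 (recL (by omega) hp)
  | ord1 hp => exact .ord1 (recL (by omega) hp)
  | ord2 hp1 hp2 => exact .ord2 (recL (by omega) hp1) (recL (by omega) hp2)
  | ord3 hp1 hp2 => exact .ord3 (recL (by omega) hp1) (recL (by omega) hp2)
  | not1 hp => exact .not1 (recL (by omega) hp)
  | not2 hp => exact .not2 (recL (by omega) hp)
  | rep1 hp => exact .rep1 (recL (by omega) hp)
  | rep2 hp1 hp2 => exact .rep2 (recL (by omega) hp1) (recL (by omega) hp2)

/-- If `G[p] xy ⇝ X` in the original semantics, then `G[p] xy ∅ ⇝ X` in the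
left-recursive extended semantics with the empty memoization table. -/
theorem lmatch_conservative_empty {N T : Type} [DecidableEq N] [DecidableEq T]
    (G : PEG N T) (p : PExp N T) (s : List T) (X : Res N T)
    (h : Match G p s X) : LMatch G p s Memo.empty X := by
  obtain ⟨n, hn⟩ := h.toMatchN
  obtain ⟨m, hm, hminm⟩ := nat_min (P := fun j => MatchN G j p s X) ⟨n, hn⟩
  exact lmatch_main G m p s X Memo.empty hm hminm
    (fun B u y t h' => by simp [Memo.empty] at h')
    (fun B u h' => by simp [Memo.empty] at h')
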